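/- arXiv:2001.02659 — 2 statements merged into one kernel-verified Lean document; each statement's English description precedes it below -/
import Mathlib

section
/- (Accumulation for gpaco) For the generalized parameterized greatest fixed point Ĝ_f(r,g) := r ⊔ G_f(r ⊔ g), we have x ⊑ Ĝ_f(r, g ⊔ x) if and only if x ⊑ Ĝ_f(r, g). -/
def pG {C : Type*} [CompleteLattice C] (f : C →o C) (r : C) : C :=
  OrderHom.gfp ⟨fun y => f (r ⊔ y), fun _ _ h => f.mono (sup_le_sup_left h r)⟩

def gpG {C : Type*} [CompleteLattice C] (f : C →o C) (r g : C) : C :=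
  r ⊔ pG f (r ⊔ g)

lemma pG_unfold {C : Type*} [CompleteLattice C] (f : C →o C) (r : C) :
    f (r ⊔ pG f r) = pG f r := by
  exact OrderHom.map_gfp ⟨fun y => f (r ⊔ y), fun _ _ h => f.mono (sup_le_sup_left h r)⟩

lemma pG_mono {C : Type*} [CompleteLattice C] (f : C →o C) {r s : C} (h : r ≤ s) :
    pG f r ≤ pG f s := by
  apply OrderHom.le_gfp
  show pG f r ≤ f (s ⊔ pG f r)
  conv_lhs => rw [← pG_unfold f r]
  exact f.mono (sup_le_sup_right h _)

lemma pG_acc {C : Type*} [CompleteLattice C] (f : C →o C) (r y : C) :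
    y ≤ pG f r ↔ y ≤ pG f (r ⊔ y) := by
  constructor
  · intro h; exact h.trans (pG_mono f le_sup_left)
  · intro h
    have key : pG f (r ⊔ y) ≤ pG f r := by
      apply OrderHom.le_gfp
      show pG f (r ⊔ y) ≤ f (r ⊔ pG f (r ⊔ y))
      conv_lhs => rw [← pG_unfold f (r ⊔ y)]
      apply f.mono
      rw [sup_assoc]
      exact sup_le_sup_left (sup_le h le_rfl) r
    exact h.trans key

theorem gpG_acc {C : Type*} [CompleteLattice C] (f : C →o C) (r g x : C) :
    x ≤ gpG f r (g ⊔ x) ↔ x ≤ gpG f r g := by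
  unfold gpG
  constructor
  · intro h
    have key : pG f (r ⊔ (g ⊔ x)) ≤ pG f (r ⊔ g) := by
      rw [pG_acc]
      apply pG_mono
      exact sup_le (le_sup_left.trans le_sup_left)
        (sup_le (le_sup_right.trans le_sup_left)
          (h.trans (sup_le_sup le_sup_left le_rfl)))
    exact h.trans (sup_le_sup_left key r)
  · intro h
    exact h.trans (sup_le_sup_left (pG_mono f (sup_le_sup_left le_sup_left r)) r)
end

section
/- Concatenation respects weak bisimilarity: if h₁ ≈ h₂ and t₁ ≈ t₂ then h₁ ⧺ t₁ ≈ h₂ ⧺ t₂. -/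
/-- Shapes of stream constructors: end, internal step, visible event. -/
inductive SShape : Type where
  | eps : SShape
  | tau : SShape
  | vis : ℕ → SShape

/-- Polynomial functor for streams: ε has no child, τ and β(n) have one child. -/
def SP : PFunctor :=
  ⟨SShape, fun a => match a with | .eps => Empty | .tau => Unit | .vis _ => Unit⟩

/-- Coinductive streams, as the final coalgebra (M-type) of `SP`. -/
def StreamT : Type := SP.M

def seps : StreamT := PFunctor.M.mk ⟨SShape.eps, Empty.elim⟩
def stau (s : StreamT) : StreamT := PFunctor.M.mk ⟨SShape.tau, fun _ => s⟩
def svis (n : ℕ) (s : StreamT) : StreamT := PFunctor.M.mk ⟨SShape.vis n, fun _ => s⟩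
/-- One corecursion step for concatenation. State `inl k` means: copy `k`;
state `inr (s, k)` means: emit `s` until its end, then continue with `k`. -/
def concatStep : StreamT ⊕ (StreamT × StreamT) → SP.Obj (StreamT ⊕ (StreamT × StreamT))
  | Sum.inl k => ⟨(PFunctor.M.dest k).1, fun i => Sum.inl ((PFunctor.M.dest k).2 i)⟩
  | Sum.inr (s, k) =>
    match PFunctor.M.dest s with
    | ⟨SShape.eps, _⟩ => ⟨(PFunctor.M.dest k).1, fun i => Sum.inl ((PFunctor.M.dest k).2 i)⟩
    | ⟨SShape.tau, f⟩ => ⟨SShape.tau, fun i => Sum.inr (f i, k)⟩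
    | ⟨SShape.vis n, f⟩ => ⟨SShape.vis n, fun i => Sum.inr (f i, k)⟩

/-- Corecursive concatenation of streams: ε ⧺ k = k, (τ·s) ⧺ k = τ·(s ⧺ k),
(β(n)·s) ⧺ k = β(n)·(s ⧺ k). -/
def sconcat (s k : StreamT) : StreamT :=
  PFunctor.M.corec concatStep (Sum.inr (s, k))
/-- The mixed inductive-coinductive functor for weak bisimilarity:
corecursive matching of ε/ε, τ/τ, β(n)/β(n) plus inductive stripping
of a single τ on either side. -/
inductive EuttF (X : StreamT → StreamT → Prop) : StreamT → StreamT → Prop where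
  | eps : EuttF X seps seps
  | tau {s t : StreamT} : X s t → EuttF X (stau s) (stau t)
  | vis {n : ℕ} {s t : StreamT} : X s t → EuttF X (svis n s) (svis n t)
  | tauL {s t : StreamT} : EuttF X s t → EuttF X (stau s) t
  | tauR {s t : StreamT} : EuttF X s t → EuttF X s (stau t)

/-- Weak bisimilarity (equivalence up-to-tau): the greatest fixed point of `EuttF`. -/
def Eutt (s t : StreamT) : Prop :=
  ∃ R : StreamT → StreamT → Prop, (∀ a b, R a b → EuttF R a b) ∧ R s t


theorem euttF_mono {X Y : StreamT → StreamT → Prop} (hXY : ∀ a b, X a b → Y a b)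
    {s t : StreamT} (h : EuttF X s t) : EuttF Y s t := by
  induction h with
  | eps => exact .eps
  | tau h => exact .tau (hXY _ _ h)
  | vis h => exact .vis (hXY _ _ h)
  | tauL _ ih => exact .tauL ih
  | tauR _ ih => exact .tauR ih

theorem eutt_unfold {s t : StreamT} (h : Eutt s t) : EuttF Eutt s t := by
  obtain ⟨R, hR, hst⟩ := h
  exact euttF_mono (fun a b hab => ⟨R, hR, hab⟩) (hR _ _ hst)

theorem copy_eq (k : StreamT) : PFunctor.M.corec concatStep (Sum.inl k) = k := by
  refine PFunctor.M.bisim (fun x y => x = PFunctor.M.corec concatStep (Sum.inl y)) ?_ _ _ rfl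
  intro x y hxy
  subst hxy
  exact ⟨(PFunctor.M.dest y).1, _, (PFunctor.M.dest y).2,
    PFunctor.M.dest_corec _ _, rfl, fun i => rfl⟩

theorem dest_injective {a b : StreamT} (h : PFunctor.M.dest a = PFunctor.M.dest b) : a = b := by
  rw [← PFunctor.M.mk_dest a, ← PFunctor.M.mk_dest b, h]

theorem sconcat_eps (k : StreamT) : sconcat seps k = k := by
  apply dest_injective
  rw [sconcat, PFunctor.M.dest_corec]
  simp only [seps, concatStep, PFunctor.M.dest_mk]
  conv_rhs => rw [← PFunctor.M.mk_dest k]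
  rw [PFunctor.M.dest_mk]
  show (⟨(PFunctor.M.dest k).1, fun i => PFunctor.M.corec concatStep
      (Sum.inl ((PFunctor.M.dest k).2 i))⟩ : SP.Obj _) = _
  exact Sigma.ext rfl (heq_of_eq (funext fun i => copy_eq _))

theorem sconcat_tau (s k : StreamT) : sconcat (stau s) k = stau (sconcat s k) := by
  apply dest_injective
  rw [sconcat, PFunctor.M.dest_corec]
  simp only [stau, concatStep, PFunctor.M.dest_mk]
  rfl

theorem sconcat_vis (n : ℕ) (s k : StreamT) : sconcat (svis n s) k = svis n (sconcat s k) := by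
  apply dest_injective
  rw [sconcat, PFunctor.M.dest_corec]
  simp only [svis, concatStep, PFunctor.M.dest_mk]
  rfl

theorem sconcat_congr_eutt {h₁ h₂ t₁ t₂ : StreamT}
    (hh : Eutt h₁ h₂) (ht : Eutt t₁ t₂) :
    Eutt (sconcat h₁ t₁) (sconcat h₂ t₂) := by
  classical
  set R : StreamT → StreamT → Prop := fun a b =>
    Eutt a b ∨ ∃ s s' k k', Eutt s s' ∧ Eutt k k' ∧ a = sconcat s k ∧ b = sconcat s' k'
    with hRdef
  refine ⟨R, ?_, Or.inr ⟨h₁, h₂, t₁, t₂, hh, ht, rfl, rfl⟩⟩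
  have key : ∀ {s s'} (k k' : StreamT), EuttF Eutt s s' → Eutt k k' →
      EuttF R (sconcat s k) (sconcat s' k') := by
    intro s s' k k' hss hkk
    induction hss with
    | eps =>
      rw [sconcat_eps, sconcat_eps]
      exact euttF_mono (fun a b hab => Or.inl hab) (eutt_unfold hkk)
    | @tau u u' hu =>
      rw [sconcat_tau, sconcat_tau]
      exact .tau (Or.inr ⟨u, u', k, k', hu, hkk, rfl, rfl⟩)
    | @vis n u u' hu =>
      rw [sconcat_vis, sconcat_vis]
      exact .vis (Or.inr ⟨u, u', k, k', hu, hkk, rfl, rfl⟩)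
    | tauL _ ih => rw [sconcat_tau]; exact .tauL ih
    | tauR _ ih => rw [sconcat_tau]; exact .tauR ih
  intro a b hab
  rcases hab with hab | ⟨s, s', k, k', hss, hkk, rfl, rfl⟩
  · exact euttF_mono (fun a b h => Or.inl h) (eutt_unfold hab)
  · exact key k k' (eutt_unfold hss) hkk
end
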